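/- Given a real inner product space H, a unit vector e ∈ H, and four vectors v₊, v₋, v₊*, v₋* ∈ H of equal positive norm, such that ⟨e, v₊⟩ > 0, ⟨e, v₋⟩ < 0, and ‖v₊ - v₋‖ ≤ ‖v₊* - v₋*‖, there exists a unit vector e* ∈ H with ⟨e, v₊⟩ ≤ ⟨e*, v₊*⟩ and ⟨e, v₋⟩ ≥ ⟨e*, v₋*⟩. -/

import Mathlib

open scoped RealInnerProductSpace

set_option maxHeartbeats 1000000 in
private lemma my_aux (r a b c : ℝ) (hr : 0 < r) (ha : 0 < a) (hb : 0 < b)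
    (har : a ≤ r) (hbr : b ≤ r) (hc : -(b*r) < c)
    (hcK : c ≤ -(a*b) + Real.sqrt (r^2-a^2) * Real.sqrt (r^2-b^2)) :
    a*r^2 + b*c ≤ Real.sqrt (r^2-b^2) * Real.sqrt (r^4-c^2) := by
  set P := Real.sqrt (r^2-a^2) with hPdef
  set S := Real.sqrt (r^2-b^2) with hSdef
  have hP0 : 0 ≤ P := Real.sqrt_nonneg _
  have hS0 : 0 ≤ S := Real.sqrt_nonneg _
  have hP2 : P^2 = r^2-a^2 := Real.sq_sqrt (by nlinarith)
  have hS2 : S^2 = r^2-b^2 := Real.sq_sqrt (by nlinarith)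
  set K := -(a*b) + P*S with hKdef
  have hPr : P ≤ r := by nlinarith
  have hSr : S ≤ r := by nlinarith
  have hKr : K < r^2 := by nlinarith
  have hKc : -(b*r) < K := lt_of_lt_of_le hc hcK
  have hcr : c < r^2 := lt_of_le_of_lt hcK hKr
  have hcr' : -(r^2) < c := by nlinarith
  have hQ2' : 0 < r^4 - c^2 := by nlinarith
  set Q := Real.sqrt (r^4-c^2) with hQdef
  have hQ0 : 0 < Q := Real.sqrt_pos.mpr hQ2'
  have hQ2 : Q^2 = r^4-c^2 := Real.sq_sqrt (le_of_lt hQ2')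
  set Y := b*P + a*S with hYdef
  have hY0 : 0 ≤ Y := by positivity
  have hY2 : Y^2 = r^4 - K^2 := by nlinarith
  have h1 : 0 ≤ b*Q + S*c := by
    rcases le_or_gt 0 c with h | h
    · positivity
    · nlinarith [hQ2, hS2, mul_nonneg hb.le hQ0.le, mul_nonneg hS0 (neg_nonneg.mpr h.le),
        mul_pos (show (0:ℝ) < b*r + c by linarith)
          (show (0:ℝ) < b*r - c by nlinarith [mul_pos hb hr])]
  have h2 : 0 ≤ b*Y + S*K := by
    rcases le_or_gt 0 K with h | h
    · positivity
    · nlinarith [hY2, hS2, mul_nonneg hb.le hY0, mul_nonneg hS0 (neg_nonneg.mpr h.le),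
        mul_pos (show (0:ℝ) < b*r + K by linarith)
          (show (0:ℝ) < b*r - K by nlinarith [mul_pos hb hr])]
  have hKc' : c ≤ K := hcK
  have hYQ : 0 < Y + Q := by positivity
  have hprod : 0 ≤ (K - c) * ((b*Q + S*c) + (b*Y + S*K)) :=
    mul_nonneg (by linarith) (by linarith)
  have h4 : S*(Y - Q)*(Y + Q) ≤ b*(K - c)*(Y + Q) := by nlinarith
  have h3 : S*(Y - Q) ≤ b*(K - c) := le_of_mul_le_mul_right h4 hYQ
  nlinarith [h3, hS2]

set_option maxHeartbeats 1000000 in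
theorem stmt_0 {H : Type*} [NormedAddCommGroup H] [InnerProductSpace ℝ H]
    (e vp vm vps vms : H) (he : ‖e‖ = 1)
    (h1 : ‖vp‖ = ‖vm‖) (h2 : ‖vm‖ = ‖vps‖) (h3 : ‖vps‖ = ‖vms‖)
    (hpos : 0 < ‖vp‖)
    (hp : 0 < ⟪e, vp⟫) (hn : ⟪e, vm⟫ < 0)
    (hd : ‖vp - vm‖ ≤ ‖vps - vms‖) :
    ∃ es : H, ‖es‖ = 1 ∧ ⟪e, vp⟫ ≤ ⟪es, vps⟫ ∧ ⟪es, vms⟫ ≤ ⟪e, vm⟫ := by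
  set r := ‖vp‖ with hrdef
  have hrm : ‖vm‖ = r := h1.symm
  have hrps : ‖vps‖ = r := by rw [← h2, hrm]
  have hrms : ‖vms‖ = r := by rw [← h3, hrps]
  set a := ⟪e, vp⟫ with hadef
  set c := ⟪vps, vms⟫ with hcdef
  set b := -⟪e, vm⟫ with hbdef
  have hvm : ⟪e, vm⟫ = -b := by rw [hbdef]; ring
  have hb : 0 < b := by rw [hbdef]; linarith
  have har : a ≤ r := by
    have := real_inner_le_norm e vp; rwa [he, one_mul] at this
  have hbr : b ≤ r := by
    have := real_inner_le_norm e (-vm)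
    rw [he, one_mul, norm_neg, inner_neg_right] at this
    rw [hrm] at this
    rw [hbdef]; exact this
  have hcc1 : c ≤ ⟪vp, vm⟫ := by
    have hsq : ‖vp - vm‖^2 ≤ ‖vps - vms‖^2 :=
      pow_le_pow_left₀ (norm_nonneg _) hd 2
    rw [norm_sub_sq_real, norm_sub_sq_real, hrm, hrps, hrms, ← hcdef] at hsq
    linarith
  have hproj : ⟪vp, vm⟫ ≤ -(a*b) + Real.sqrt (r^2-a^2) * Real.sqrt (r^2-b^2) := by
    set p' := vp - a • e with hp'def
    set m' := vm + b • e with hm'def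
    have hp'n : ‖p'‖^2 = r^2 - a^2 := by
      rw [hp'def, norm_sub_sq_real, inner_smul_right, real_inner_comm e vp, ← hadef,
        norm_smul, he]
      simp [mul_pow]
      ring
    have hm'n : ‖m'‖^2 = r^2 - b^2 := by
      rw [hm'def, norm_add_sq_real, inner_smul_right, real_inner_comm e vm, hvm,
        norm_smul, he, hrm]
      simp [mul_pow]
      ring
    have hinner : ⟪p', m'⟫ = ⟪vp, vm⟫ + a*b := by
      rw [hp'def, hm'def]
      simp only [inner_sub_left, inner_add_right, real_inner_smul_left,
        real_inner_smul_right, real_inner_self_eq_norm_sq, he,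
        real_inner_comm e vm, real_inner_comm e vp]
      rw [hvm, ← hadef]
      ring
    have hCS := real_inner_le_norm p' m'
    have hP : ‖p'‖ = Real.sqrt (r^2-a^2) := by
      rw [← hp'n, Real.sqrt_sq (norm_nonneg _)]
    have hM : ‖m'‖ = Real.sqrt (r^2-b^2) := by
      rw [← hm'n, Real.sqrt_sq (norm_nonneg _)]
    rw [hinner, hP, hM] at hCS
    linarith
  set P := Real.sqrt (r^2-a^2) with hPdef
  set S := Real.sqrt (r^2-b^2) with hSdef
  have hcK : c ≤ -(a*b) + P * S := le_trans hcc1 hproj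
  by_cases hcase : c ≤ -(b*r)
  · refine ⟨(r : ℝ)⁻¹ • vps, ?_, ?_, ?_⟩
    · rw [norm_smul, hrps, norm_inv, Real.norm_of_nonneg hpos.le,
        inv_mul_cancel₀ (ne_of_gt hpos)]
    · rw [real_inner_smul_left, real_inner_self_eq_norm_sq, hrps]
      have hr1 : r⁻¹ * r ^ 2 = r := by field_simp
      rw [hr1]; exact har
    · rw [real_inner_smul_left, ← hcdef, hvm]
      have hrinv : 0 < r⁻¹ := inv_pos.mpr hpos
      nlinarith [mul_inv_cancel₀ (ne_of_gt hpos)]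
  · push_neg at hcase
    have hS0 : 0 ≤ S := Real.sqrt_nonneg _
    have hP0 : 0 ≤ P := Real.sqrt_nonneg _
    have hP2 : P^2 = r^2-a^2 := Real.sq_sqrt (by nlinarith)
    have hS2 : S^2 = r^2-b^2 := Real.sq_sqrt (by nlinarith)
    have hPr : P ≤ r := by nlinarith
    have hSr : S ≤ r := by nlinarith
    have hcr : c < r^2 := by nlinarith
    have hcr' : -(r^2) < c := by nlinarith
    have hQ2' : 0 < r^4 - c^2 := by nlinarith
    set Q := Real.sqrt (r^4-c^2) with hQdef
    have hQ0 : 0 < Q := Real.sqrt_pos.mpr hQ2'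
    have hQne : Q ≠ 0 := ne_of_gt hQ0
    have hrne : r ≠ 0 := ne_of_gt hpos
    have hQ2 : Q^2 = r^4-c^2 := Real.sq_sqrt hQ2'.le
    have hkey : a*r^2 + b*c ≤ S * Q := my_aux r a b c hpos hp hb har hbr hcase hcK
    set β := S / Q with hβdef
    set α := -(b*Q + S*c)/(r^2*Q) with hαdef
    have hinps : ⟪β • vps + α • vms, vps⟫ = β * r^2 + α * c := by
      rw [inner_add_left, real_inner_smul_left, real_inner_smul_left,
        real_inner_self_eq_norm_sq, hrps, real_inner_comm vps vms, ← hcdef]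
    have hinms : ⟪β • vps + α • vms, vms⟫ = β * c + α * r^2 := by
      rw [inner_add_left, real_inner_smul_left, real_inner_smul_left,
        real_inner_self_eq_norm_sq, hrms, ← hcdef]
    refine ⟨β • vps + α • vms, ?_, ?_, ?_⟩
    · have hself : ⟪β • vps + α • vms, β • vps + α • vms⟫
          = β * (β * r^2 + α * c) + α * (β * c + α * r^2) := by
        rw [inner_add_right, real_inner_smul_right, real_inner_smul_right, hinps, hinms]
      have hn2 : ‖β • vps + α • vms‖^2 = 1 := by
        rw [← real_inner_self_eq_norm_sq, hself, hβdef, hαdef]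
        field_simp
        linear_combination (-(S^2)) * hQ2 + (Q^2) * hS2
      have hfac : (‖β • vps + α • vms‖ - 1) * (‖β • vps + α • vms‖ + 1) = 0 := by
        linear_combination hn2
      rcases mul_eq_zero.mp hfac with h | h
      · linarith
      · linarith [norm_nonneg (β • vps + α • vms)]
    · rw [hinps]
      have hval : β * r^2 + α * c = (S*Q - b*c)/r^2 := by
        rw [hβdef, hαdef]
        field_simp
        linear_combination (-S) * hQ2
      rw [hval, le_div_iff₀ (by positivity : (0:ℝ) < r^2)]
      linarith
    · rw [hinms, hvm]
      have hval : β * c + α * r^2 = -b := by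
        rw [hβdef, hαdef]
        field_simp
        ring
      rw [hval]
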